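/- arXiv:1402.0773 — 3 statements merged into one kernel-verified Lean document; each statement's English description precedes it below -/
import Mathlib

section
/- Let 𝒰, 𝒱 be positive definite functionals on real polynomials, m ≥ 1, λ > 0, and ⟨p,r⟩_{λ,ν} = ⟨𝒰, pr⟩ + λ⟨𝒱, (D_ν^m p)(D_ν^m r)⟩ with Sobolev monic OPS {S_n(x;λ,ν)}. Define T_n(x;ν) = lim_{λ→∞} S_n(x;λ,ν) (which exists as a monic polynomial of degree n). Then ⟨𝒰, T_n(x;ν)·x^i⟩ = 0 for all i < min{n, m}. -/
open Polynomial Finset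

/-- The forward difference operator (D_ω p)(x) = (p(x+ω)-p(x))/ω. -/
noncomputable def Dw (ω : ℝ) : Polynomial ℝ →ₗ[ℝ] Polynomial ℝ where
  toFun p := C ω⁻¹ * (p.comp (X + C ω) - p)
  map_add' p r := by
    ext n
    simp [add_comp, coeff_C_mul, coeff_sub, coeff_add]
    ring
  map_smul' c p := by
    ext n
    simp [smul_comp, coeff_C_mul, coeff_smul, coeff_sub, smul_eq_mul]
    ring

/-- The q-derivative operator (D_q p)(x) = (p(qx)-p(x))/((q-1)x). -/
noncomputable def Dq (q : ℝ) : Polynomial ℝ →ₗ[ℝ] Polynomial ℝ where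
  toFun p := C (q-1)⁻¹ * (p.comp (C q * X) - p).divX
  map_add' p r := by
    ext n
    simp [add_comp, coeff_divX, coeff_C_mul, coeff_sub, coeff_add]
    ring
  map_smul' c p := by
    ext n
    simp [smul_comp, coeff_divX, coeff_C_mul, coeff_smul, coeff_sub, smul_eq_mul]
    ring

/-- η_{n,m,ω} = (n+1)_m. -/
noncomputable def etaW (m n : ℕ) : ℝ := ∏ k ∈ Finset.range m, ((n : ℝ) + 1 + k)

/-- η_{n,m,q} = (q^{n+1};q)_m/(1-q)^m. -/
noncomputable def etaQ (q : ℝ) (m n : ℕ) : ℝ :=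
  (∏ k ∈ Finset.range m, (1 - q ^ (n + 1 + k))) / (1 - q) ^ m

/-- `D` is the difference operator D_ν, with `η n = η_{n,m,ν}` its order-`m` normalization
constants, for ν = ω ∈ ℝ∖{0} or ν = q ∈ ℝ∖{0,±1}. -/
def NuData (D : Polynomial ℝ →ₗ[ℝ] Polynomial ℝ) (m : ℕ) (η : ℕ → ℝ) : Prop :=
  (∃ ω : ℝ, ω ≠ 0 ∧ D = Dw ω ∧ η = etaW m) ∨
  (∃ q : ℝ, q ≠ 0 ∧ q ≠ 1 ∧ q ≠ -1 ∧ D = Dq q ∧ η = etaQ q m)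

/-- A positive definite linear functional. -/
def PosDef (U : Polynomial ℝ →ₗ[ℝ] ℝ) : Prop :=
  ∀ p : Polynomial ℝ, p ≠ 0 → 0 < U (p * p)

/-- `P` is the sequence of monic orthogonal polynomials of the functional `U`. -/
def IsMOPS (U : Polynomial ℝ →ₗ[ℝ] ℝ) (P : ℕ → Polynomial ℝ) : Prop :=
  (∀ n, (P n).Monic) ∧ (∀ n, (P n).natDegree = n) ∧ ∀ n k, n ≠ k → U (P n * P k) = 0

/-- The Sobolev bilinear form ⟨p,r⟩_{λ,ν} = ⟨𝒰, pr⟩ + λ⟨𝒱, (D_ν^m p)(D_ν^m r)⟩. -/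
noncomputable def sob (U V : Polynomial ℝ →ₗ[ℝ] ℝ) (lam : ℝ)
    (D : Polynomial ℝ →ₗ[ℝ] Polynomial ℝ) (m : ℕ) (p r : Polynomial ℝ) : ℝ :=
  U (p * r) + lam * V (((D ^ m) p) * ((D ^ m) r))

/-- `S` is the monic OPS of the Sobolev inner product. -/
def IsSobMOPS (U V : Polynomial ℝ →ₗ[ℝ] ℝ) (lam : ℝ)
    (D : Polynomial ℝ →ₗ[ℝ] Polynomial ℝ) (m : ℕ) (S : ℕ → Polynomial ℝ) : Prop :=
  (∀ n, (S n).Monic) ∧ (∀ n, (S n).natDegree = n) ∧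
    ∀ n k, n ≠ k → sob U V lam D m (S n) (S k) = 0

/-- The monic normalized m-th difference derivatives Pₙ^{[m,ν]} = D_ν^m P_{n+m}/η_{n,m,ν}. -/
noncomputable def Pm (D : Polynomial ℝ →ₗ[ℝ] Polynomial ℝ) (η : ℕ → ℝ) (m : ℕ)
    (P : ℕ → Polynomial ℝ) (n : ℕ) : Polynomial ℝ :=
  C (η n)⁻¹ * ((D ^ m) (P (n + m)))

/-- (𝒰,𝒱) is an (M,N)-D_ν-coherent pair of order m, witnessed by the MOPS `P`, `Q` and
coefficients `a`, `b` (with the conventions a₀ₙ = b₀ₙ = 1, aᵢₙ = bᵢₙ = 0 for i > n). -/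
def Coherent (D : Polynomial ℝ →ₗ[ℝ] Polynomial ℝ) (η : ℕ → ℝ) (m : ℕ)
    (P Q : ℕ → Polynomial ℝ) (M N : ℕ) (a b : ℕ → ℕ → ℝ) : Prop :=
  (∀ n, a 0 n = 1) ∧ (∀ n, b 0 n = 1) ∧
  (∀ i n, n < i → a i n = 0) ∧ (∀ i n, n < i → b i n = 0) ∧
  (∀ n, M ≤ n → a M n ≠ 0) ∧ (∀ n, N ≤ n → b N n ≠ 0) ∧
  ∀ n, ∑ i ∈ Finset.range (M + 1), a i n • Pm D η m P (n - i)
      = ∑ i ∈ Finset.range (N + 1), b i n • Q (n - i)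

lemma Dzero (D : Polynomial ℝ →ₗ[ℝ] Polynomial ℝ) (m : ℕ) (η : ℕ → ℝ) (hν : NuData D m η) :
    ∀ p : Polynomial ℝ, p.natDegree = 0 → D p = 0 := by
  intro p hp
  obtain ⟨c, rfl⟩ := Polynomial.natDegree_eq_zero.mp hp
  rcases hν with ⟨ω, hω, rfl, -⟩ | ⟨q, hq, hq1, hq2, rfl, -⟩
  · show C ω⁻¹ * ((C c).comp (X + C ω) - C c) = 0
    simp
  · show C (q-1)⁻¹ * ((C c).comp (C q * X) - C c).divX = 0
    simp

lemma Ddrop (D : Polynomial ℝ →ₗ[ℝ] Polynomial ℝ) (m : ℕ) (η : ℕ → ℝ) (hν : NuData D m η) :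
    ∀ (p : Polynomial ℝ) (k : ℕ), p.natDegree ≤ k + 1 → (D p).natDegree ≤ k := by
  intro p k hpk
  by_cases h0 : p.natDegree = 0
  · rw [Dzero D m η hν p h0]; simp
  have hp0 : p ≠ 0 := fun h => h0 (by simp [h])
  rcases hν with ⟨ω, hω, rfl, -⟩ | ⟨q, hq, hq1, hq2, rfl, -⟩
  · show (C ω⁻¹ * (p.comp (X + C ω) - p)).natDegree ≤ k
    refine (natDegree_C_mul_le _ _).trans ?_
    have hXd : (X + C ω).natDegree = 1 := natDegree_X_add_C ω
    have hlc : (p.comp (X + C ω)).leadingCoeff = p.leadingCoeff := by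
      rw [leadingCoeff_comp (by rw [hXd]; exact one_ne_zero)]
      simp [(monic_X_add_C ω).leadingCoeff]
    have hcomp_ne : p.comp (X + C ω) ≠ 0 := by
      intro h
      rw [h, leadingCoeff_zero] at hlc
      exact hp0 (leadingCoeff_eq_zero.mp hlc.symm)
    have hnd : (p.comp (X + C ω)).natDegree = p.natDegree := by
      rw [natDegree_comp, hXd, mul_one]
    have hdeg : (p.comp (X + C ω)).degree = p.degree := by
      rw [degree_eq_natDegree hcomp_ne, degree_eq_natDegree hp0, hnd]
    have hlt : (p.comp (X + C ω) - p).degree < p.degree :=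
      hdeg ▸ degree_sub_lt hdeg hcomp_ne hlc
    by_cases hz : p.comp (X + C ω) - p = 0
    · rw [hz]; simp
    · have := natDegree_lt_natDegree hz hlt
      omega
  · show (C (q-1)⁻¹ * (p.comp (C q * X) - p).divX).natDegree ≤ k
    refine (natDegree_C_mul_le _ _).trans ?_
    refine natDegree_divX_eq_natDegree_tsub_one.trans_le ?_
    have h1 : (p.comp (C q * X)).natDegree = p.natDegree := by
      rw [natDegree_comp, natDegree_C_mul_X q hq, mul_one]
    have := natDegree_sub_le (p.comp (C q * X)) p
    omega

lemma Dpow_zero (D : Polynomial ℝ →ₗ[ℝ] Polynomial ℝ) (m : ℕ) (η : ℕ → ℝ)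
    (hν : NuData D m η) : ∀ (j : ℕ) (p : Polynomial ℝ), p.natDegree < j → (D ^ j) p = 0 := by
  intro j
  induction j with
  | zero => intro p hp; omega
  | succ j ih =>
    intro p hp
    rw [pow_succ, Module.End.mul_apply]
    cases j with
    | zero =>
      rw [pow_zero, Module.End.one_apply]
      exact Dzero D m η hν p (by omega)
    | succ j' =>
      exact ih _ (Nat.lt_succ_of_le (Ddrop D m η hν p j' (by omega)))

lemma sob_add (U V : Polynomial ℝ →ₗ[ℝ] ℝ) (lam : ℝ) (D : Polynomial ℝ →ₗ[ℝ] Polynomial ℝ)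
    (m : ℕ) (p r s : Polynomial ℝ) :
    sob U V lam D m p (r + s) = sob U V lam D m p r + sob U V lam D m p s := by
  simp [sob, mul_add, map_add]; ring

lemma sob_smul (U V : Polynomial ℝ →ₗ[ℝ] ℝ) (lam : ℝ) (D : Polynomial ℝ →ₗ[ℝ] Polynomial ℝ)
    (m : ℕ) (c : ℝ) (p r : Polynomial ℝ) :
    sob U V lam D m p (c • r) = c * sob U V lam D m p r := by
  simp [sob, mul_smul_comm, map_smul, smul_eq_mul]; ring

lemma sob_orth_low (U V : Polynomial ℝ →ₗ[ℝ] ℝ) (lam : ℝ)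
    (D : Polynomial ℝ →ₗ[ℝ] Polynomial ℝ) (m : ℕ) (S : ℕ → Polynomial ℝ)
    (hmon : ∀ n, (S n).Monic) (hdeg : ∀ n, (S n).natDegree = n)
    (horth : ∀ n k, n ≠ k → sob U V lam D m (S n) (S k) = 0) :
    ∀ (d n : ℕ) (r : Polynomial ℝ), r.natDegree ≤ d → d < n → sob U V lam D m (S n) r = 0 := by
  intro d
  induction d with
  | zero =>
    intro n r hr hn
    have hS0 : S 0 = 1 := (hmon 0).natDegree_eq_zero.mp (hdeg 0)
    obtain ⟨c, rfl⟩ := Polynomial.natDegree_eq_zero.mp (Nat.le_zero.mp hr)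
    have : (C c : Polynomial ℝ) = c • S 0 := by rw [hS0, smul_eq_C_mul, mul_one]
    rw [this, sob_smul, horth n 0 (by omega), mul_zero]
  | succ d ih =>
    intro n r hr hn
    set c := r.coeff (d + 1) with hc
    have hcoef : (S (d+1)).coeff (d+1) = 1 := by
      have := (hmon (d+1)).coeff_natDegree
      rwa [hdeg (d+1)] at this
    have hlow : (r - c • S (d + 1)).natDegree ≤ d := by
      rw [natDegree_le_iff_coeff_eq_zero]
      intro N hN
      rw [coeff_sub, coeff_smul, smul_eq_mul]
      rcases eq_or_lt_of_le (Nat.succ_le_of_lt hN) with h | h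
      · rw [← h, hcoef, mul_one, hc, sub_self]
      · rw [coeff_eq_zero_of_natDegree_lt (by omega),
          coeff_eq_zero_of_natDegree_lt (by rw [hdeg]; omega)]
        ring
    have : r = (r - c • S (d + 1)) + c • S (d + 1) := by ring
    rw [this, sob_add, sob_smul, ih n _ hlow (by omega), horth n (d+1) (by omega),
      mul_zero, add_zero]

lemma U_mul_Xpow_repr (U : Polynomial ℝ →ₗ[ℝ] ℝ) (n i : ℕ) (p : Polynomial ℝ)
    (hp : p.natDegree ≤ n) :
    U (p * X ^ i) = ∑ j ∈ Finset.range (n + 1), p.coeff j * U (X ^ j * X ^ i) := by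
  conv_lhs => rw [p.as_sum_range' (n+1) (Nat.lt_succ_of_le hp)]
  rw [Finset.sum_mul, map_sum]
  refine Finset.sum_congr rfl fun j _ => ?_
  rw [← C_mul_X_pow_eq_monomial, mul_assoc, ← smul_eq_C_mul, map_smul, smul_eq_mul]

/-- the limit polynomials Tₙ(x;ν) = lim_{λ→∞} Sₙ(x;λ,ν) satisfy
⟨𝒰, Tₙ xⁱ⟩ = 0 for all i < min{n,m}. -/
theorem stmt13 (D : Polynomial ℝ →ₗ[ℝ] Polynomial ℝ) (η : ℕ → ℝ) (m : ℕ)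
    (hν : NuData D m η) (hm : 1 ≤ m) (U V : Polynomial ℝ →ₗ[ℝ] ℝ)
    (hU : PosDef U) (hV : PosDef V)
    (S : ℝ → ℕ → Polynomial ℝ)
    (hS : ∀ lam : ℝ, 0 < lam → IsSobMOPS U V lam D m (S lam))
    (T : ℕ → Polynomial ℝ) (hTmonic : ∀ n, (T n).Monic) (hTdeg : ∀ n, (T n).natDegree = n)
    (hT : ∀ n i : ℕ, Filter.Tendsto (fun lam => (S lam n).coeff i)
      Filter.atTop (nhds ((T n).coeff i))) :
    ∀ n i : ℕ, i < min n m → U (T n * X ^ i) = 0 := by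
  intro n i hi
  rw [lt_min_iff] at hi
  -- For each lam > 0, U (S lam n * X^i) = 0
  have key : ∀ lam : ℝ, 0 < lam → U (S lam n * X ^ i) = 0 := by
    intro lam hlam
    obtain ⟨hmon, hdeg, horth⟩ := hS lam hlam
    have hDXi : (D ^ m) (X ^ i : Polynomial ℝ) = 0 :=
      Dpow_zero D m η hν m (X ^ i) (by rw [natDegree_X_pow]; exact hi.2)
    have hsob : sob U V lam D m (S lam n) (X ^ i) = 0 :=
      sob_orth_low U V lam D m (S lam) hmon hdeg horth i n (X ^ i)
        (by rw [natDegree_X_pow]) hi.1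
    have : sob U V lam D m (S lam n) (X ^ i) = U (S lam n * X ^ i) := by
      rw [sob, hDXi, mul_zero, map_zero, mul_zero, add_zero]
    rw [← this, hsob]
  -- Pass to the limit
  have hTrep : U (T n * X ^ i) = ∑ j ∈ Finset.range (n + 1), (T n).coeff j * U (X ^ j * X ^ i) :=
    U_mul_Xpow_repr U n i (T n) (le_of_eq (hTdeg n))
  have htend : Filter.Tendsto
      (fun lam => ∑ j ∈ Finset.range (n + 1), (S lam n).coeff j * U (X ^ j * X ^ i))
      Filter.atTop (nhds (U (T n * X ^ i))) := by
    rw [hTrep]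
    exact tendsto_finset_sum _ fun j _ => (hT n j).mul_const _
  have heq : (fun lam => ∑ j ∈ Finset.range (n + 1), (S lam n).coeff j * U (X ^ j * X ^ i))
      =ᶠ[Filter.atTop] (fun _ => (0 : ℝ)) := by
    filter_upwards [Filter.eventually_gt_atTop (0 : ℝ)] with lam hlam
    rw [← U_mul_Xpow_repr U n i (S lam n) (le_of_eq ((hS lam hlam).2.1 n))]
    exact key lam hlam
  have := (Filter.Tendsto.congr' heq htend)
  exact tendsto_nhds_unique this tendsto_const_nhds
end

section
/- Under the same setup, the limit polynomials T_n(x;ν) = lim_{λ→∞} S_n(x;λ,ν) satisfy ⟨𝒱, D_ν^m[T_n(x;ν)]·x^j⟩ = 0 for all j < n - m. Consequently, for all n ≥ 0, D_ν^m[T_{n+m}(x;ν)]/η_{n,m,ν} = Q_n(x), the n-th monic orthogonal polynomial of 𝒱. -/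
open Polynomial Finset

open Filter

lemma lemA (L : Polynomial ℝ →ₗ[ℝ] ℝ) (P : ℕ → Polynomial ℝ)
    (hd : ∀ k, (P k).natDegree = k) (h0 : ∀ k, P k ≠ 0) (N : ℕ)
    (hL : ∀ k, k < N → L (P k) = 0) :
    ∀ p : Polynomial ℝ, p.natDegree < N → L p = 0 := by
  suffices H : ∀ B : ℕ, ∀ p : Polynomial ℝ, p.natDegree ≤ B → p.natDegree < N → L p = 0 by
    intro p hp; exact H p.natDegree p le_rfl hp
  intro B
  induction B with
  | zero =>
    intro p hp hpN
    by_cases h : p = 0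
    · simp [h]
    · have hP0 : P 0 = C ((P 0).coeff 0) := (Polynomial.eq_C_of_natDegree_eq_zero (hd 0))
      have ha : (P 0).coeff 0 ≠ 0 := by
        intro h0'; exact h0 0 (by rw [hP0, h0', map_zero])
      have hp0 : p = C (p.coeff 0) := Polynomial.eq_C_of_natDegree_le_zero hp
      have hps : p = (p.coeff 0 / (P 0).coeff 0) • P 0 := by
        conv_rhs => rw [hP0]
        simp only [coeff_C_zero]
        rw [Polynomial.smul_C, smul_eq_mul, div_mul_cancel₀ _ ha]
        exact hp0
      rw [hps, map_smul, smul_eq_mul, hL 0 (by omega), mul_zero]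
  | succ B IH =>
    intro p hp hpN
    by_cases h : p = 0
    · simp [h]
    · set d := p.natDegree with hdd
      have hPd0 : (P d).leadingCoeff ≠ 0 := leadingCoeff_ne_zero.mpr (h0 d)
      set c := p.leadingCoeff / (P d).leadingCoeff with hc
      set p' := p - C c * P d with hp'
      have hcoeff : p'.coeff d = 0 := by
        have h1 : (P d).coeff d = (P d).leadingCoeff := by
          rw [Polynomial.leadingCoeff, hd d]
        have h2 : p.coeff d = p.leadingCoeff := rfl
        simp only [hp', coeff_sub, coeff_C_mul, h1, h2, hc]
        field_simp
        ring
      have hdeg' : p'.natDegree ≤ d := by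
        refine le_trans (natDegree_sub_le _ _) (max_le le_rfl ?_)
        exact le_trans (natDegree_C_mul_le _ _) (le_of_eq (hd d))
      have hltB : p'.natDegree ≤ B := by
        by_cases h' : p' = 0
        · simp [h']
        · have : p'.natDegree ≠ d := by
            intro he
            exact h' (leadingCoeff_eq_zero.mp (by rw [Polynomial.leadingCoeff, he, hcoeff]))
          omega
      have hsplit : p = p' + c • P d := by
        rw [hp', Polynomial.smul_eq_C_mul]; ring
      rw [hsplit, map_add, map_smul, smul_eq_mul, hL d (by omega),
        IH p' hltB (by omega), mul_zero, add_zero]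


lemma lemB (L : Polynomial ℝ →ₗ[ℝ] ℝ) (n : ℕ) (f : ℝ → Polynomial ℝ) (g : Polynomial ℝ)
    (hf : ∀ᶠ lam in Filter.atTop, (f lam).natDegree ≤ n) (hg : g.natDegree ≤ n)
    (hc : ∀ i, Filter.Tendsto (fun lam => (f lam).coeff i) Filter.atTop (nhds (g.coeff i))) :
    Filter.Tendsto (fun lam => L (f lam)) Filter.atTop (nhds (L g)) := by
  have key : ∀ p : Polynomial ℝ, p.natDegree ≤ n →
      L p = ∑ i ∈ range (n+1), p.coeff i * L (X ^ i) := by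
    intro p hp
    conv_lhs => rw [p.as_sum_range' (n+1) (Nat.lt_succ_of_le hp)]
    rw [map_sum]
    exact Finset.sum_congr rfl fun i _ => by
      rw [← Polynomial.smul_X_eq_monomial, map_smul, smul_eq_mul]
  rw [key g hg]
  have heq : (fun lam => ∑ i ∈ range (n+1), (f lam).coeff i * L (X ^ i)) =ᶠ[Filter.atTop]
      (fun lam => L (f lam)) := hf.mono fun lam h => (key (f lam) h).symm
  exact Filter.Tendsto.congr' heq (tendsto_finset_sum _ fun i _ => (hc i).mul_const _)

lemma Dw_coeff (ω : ℝ) (p : Polynomial ℝ) (j : ℕ) :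
    (Dw ω p).coeff j = ω⁻¹ * ((Polynomial.hasseDeriv j p).eval ω - p.coeff j) := by
  show (C ω⁻¹ * (p.comp (X + C ω) - p)).coeff j = _
  rw [coeff_C_mul, coeff_sub, ← Polynomial.taylor_apply, Polynomial.taylor_coeff]

lemma Dw_step (ω : ℝ) (hω : ω ≠ 0) (p : Polynomial ℝ) (d : ℕ) (hp : p.natDegree ≤ d + 1) :
    (Dw ω p).natDegree ≤ d ∧ (Dw ω p).coeff d = ((d : ℝ) + 1) * p.coeff (d + 1) := by
  constructor
  · rw [natDegree_le_iff_coeff_eq_zero]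
    intro j hj
    rw [Dw_coeff]
    have hh : Polynomial.hasseDeriv j p = C (p.coeff j) := by
      ext t
      rw [Polynomial.hasseDeriv_coeff, coeff_C]
      match t with
      | 0 => simp
      | t + 1 =>
        have : p.coeff (t + 1 + j) = 0 :=
          coeff_eq_zero_of_natDegree_lt (by omega)
        simp [this]
    rw [hh, eval_C, sub_self, mul_zero]
  · rw [Dw_coeff]
    have hh : Polynomial.hasseDeriv d p
        = C (p.coeff d) + C (((d : ℝ) + 1) * p.coeff (d + 1)) * X := by
      ext t
      rw [Polynomial.hasseDeriv_coeff]
      match t with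
      | 0 => simp
      | 1 =>
        have hch : (1 + d).choose d = d + 1 := by
          rw [Nat.add_comm]; exact Nat.choose_succ_self_right d
        simp only [hch, coeff_add, coeff_C, coeff_C_mul, coeff_X_one, if_neg one_ne_zero,
          zero_add, mul_one]
        rw [Nat.add_comm 1 d]
        push_cast
        ring
      | t + 2 =>
        have h0 : p.coeff (t + 2 + d) = 0 :=
          coeff_eq_zero_of_natDegree_lt (by omega)
        have hx : (X : Polynomial ℝ).coeff (t + 2) = 0 := by
          rw [Polynomial.coeff_X]; simp
        simp [h0, hx, Polynomial.coeff_one]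
    rw [hh]
    simp only [eval_add, eval_mul, eval_C, eval_X]
    field_simp
    ring

lemma comp_C_mul_X_coeff (p : Polynomial ℝ) (q : ℝ) (k : ℕ) :
    (p.comp (C q * X)).coeff k = q ^ k * p.coeff k := by
  induction p using Polynomial.induction_on' with
  | add p r hp hr => simp [add_comp, hp, hr, mul_add]
  | monomial i c =>
    simp only [← C_mul_X_pow_eq_monomial, mul_comp, C_comp, pow_comp, X_comp, mul_pow,
      ← C_pow, ← mul_assoc, ← C_mul, coeff_C_mul, coeff_X_pow]
    by_cases h : k = i
    · subst h; simp [mul_comm]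
    · simp [h]

lemma Dq_coeff (q : ℝ) (p : Polynomial ℝ) (j : ℕ) :
    (Dq q p).coeff j = ((q - 1)⁻¹ * (q ^ (j + 1) - 1)) * p.coeff (j + 1) := by
  show (C (q - 1)⁻¹ * (p.comp (C q * X) - p).divX).coeff j = _
  rw [coeff_C_mul, coeff_divX, coeff_sub, comp_C_mul_X_coeff]
  ring

lemma Dq_step (q : ℝ) (p : Polynomial ℝ) (d : ℕ) (hp : p.natDegree ≤ d + 1) :
    (Dq q p).natDegree ≤ d ∧
      (Dq q p).coeff d = ((q - 1)⁻¹ * (q ^ (d + 1) - 1)) * p.coeff (d + 1) := by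
  refine ⟨?_, Dq_coeff q p d⟩
  rw [natDegree_le_iff_coeff_eq_zero]
  intro j hj
  rw [Dq_coeff, coeff_eq_zero_of_natDegree_lt (by omega), mul_zero]

lemma pow_step (D : Polynomial ℝ →ₗ[ℝ] Polynomial ℝ) (c : ℕ → ℝ)
    (hstep : ∀ (p : Polynomial ℝ) (d : ℕ), p.natDegree ≤ d + 1 →
      (D p).natDegree ≤ d ∧ (D p).coeff d = c d * p.coeff (d + 1)) :
    ∀ (m : ℕ) (p : Polynomial ℝ) (n : ℕ), p.natDegree ≤ n + m →
      ((D ^ m) p).natDegree ≤ n ∧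
        ((D ^ m) p).coeff n = (∏ k ∈ range m, c (n + k)) * p.coeff (n + m) := by
  intro m
  induction m with
  | zero => intro p n h; simpa using h
  | succ m IH =>
    intro p n h
    have h1 := hstep p (n + m) (by omega)
    have h2 := IH (D p) n h1.1
    rw [pow_succ, Module.End.mul_apply]
    refine ⟨h2.1, ?_⟩
    rw [h2.2, h1.2, Finset.prod_range_succ, show n + m + 1 = n + (m + 1) from rfl]
    ring

lemma etaQ_eq (q : ℝ) (hq1 : q ≠ 1) (m n : ℕ) :
    (∏ k ∈ range m, ((q - 1)⁻¹ * (q ^ (n + k + 1) - 1))) = etaQ q m n := by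
  have hq : (1 : ℝ) - q ≠ 0 := sub_ne_zero.mpr (Ne.symm hq1)
  rw [etaQ, eq_div_iff (pow_ne_zero _ hq)]
  have hcg : ∀ k ∈ range m, (q - 1)⁻¹ * (q ^ (n + k + 1) - 1)
      = (1 - q)⁻¹ * (1 - q ^ (n + 1 + k)) := by
    intro k _
    rw [show n + 1 + k = n + k + 1 by omega]
    rw [inv_eq_one_div, inv_eq_one_div]
    rw [div_mul_eq_mul_div, div_mul_eq_mul_div, div_eq_div_iff (sub_ne_zero.mpr hq1) hq]
    ring
  rw [Finset.prod_congr rfl hcg, Finset.prod_mul_distrib, Finset.prod_const]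
  field_simp
  rw [Finset.card_range, mul_comm, ← mul_assoc, ← mul_pow, mul_one_div_cancel hq, one_pow, one_mul]

lemma lemD {D : Polynomial ℝ →ₗ[ℝ] Polynomial ℝ} {m : ℕ} {η : ℕ → ℝ}
    (hν : NuData D m η) :
    (∀ n, η n ≠ 0) ∧
      ∀ (p : Polynomial ℝ) (n : ℕ), p.natDegree ≤ n + m →
        ((D ^ m) p).natDegree ≤ n ∧ ((D ^ m) p).coeff n = η n * p.coeff (n + m) := by
  rcases hν with ⟨ω, hω, hD, hη⟩ | ⟨q, hq0, hq1, hqn1, hD, hη⟩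
  · subst hD; subst hη
    constructor
    · intro n
      rw [etaW]
      apply Finset.prod_ne_zero_iff.mpr
      intro k _
      positivity
    · intro p n h
      have hs := pow_step (Dw ω) (fun d => (d : ℝ) + 1)
        (fun p d hp => Dw_step ω hω p d hp) m p n h
      refine ⟨hs.1, ?_⟩
      rw [hs.2, etaW]
      congr 1
      refine Finset.prod_congr rfl fun k _ => ?_
      push_cast
      ring
  · subst hD; subst hη
    have hqpow : ∀ t : ℕ, t ≠ 0 → q ^ t ≠ 1 := by
      intro t ht h
      rcases (pow_eq_one_iff_of_ne_zero ht).mp h with h1 | ⟨h1, _⟩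
      · exact hq1 h1
      · exact hqn1 h1
    constructor
    · intro n
      rw [etaQ]
      apply div_ne_zero
      · apply Finset.prod_ne_zero_iff.mpr
        intro k _
        exact sub_ne_zero.mpr fun h => hqpow (n + 1 + k) (by omega) h.symm
      · exact pow_ne_zero _ (sub_ne_zero.mpr fun h => hq1 (by linarith))
    · intro p n h
      have hs := pow_step (Dq q) (fun d => (q - 1)⁻¹ * (q ^ (d + 1) - 1))
        (fun p d hp => Dq_step q p d hp) m p n h
      refine ⟨hs.1, ?_⟩
      rw [hs.2, ← etaQ_eq q hq1]

noncomputable def sobLin (U V : Polynomial ℝ →ₗ[ℝ] ℝ) (lam : ℝ)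
    (D : Polynomial ℝ →ₗ[ℝ] Polynomial ℝ) (m : ℕ) (s : Polynomial ℝ) :
    Polynomial ℝ →ₗ[ℝ] ℝ :=
  U.comp (LinearMap.mulLeft ℝ s) +
    lam • ((V.comp (LinearMap.mulLeft ℝ ((D ^ m) s))).comp (D ^ m))

lemma sobLin_apply (U V : Polynomial ℝ →ₗ[ℝ] ℝ) (lam : ℝ)
    (D : Polynomial ℝ →ₗ[ℝ] Polynomial ℝ) (m : ℕ) (s r : Polynomial ℝ) :
    sobLin U V lam D m s r = sob U V lam D m s r := by
  simp [sobLin, sob, LinearMap.add_apply, LinearMap.smul_apply, LinearMap.comp_apply,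
    LinearMap.mulLeft_apply, smul_eq_mul]

/-- the limit polynomials Tₙ(x;ν) = lim_{λ→∞} Sₙ(x;λ,ν) satisfy
⟨𝒱, D_ν^m[Tₙ]·xʲ⟩ = 0 for j < n-m; consequently D_ν^m[T_{n+m}]/η_{n,m,ν} = Qₙ,
the n-th monic orthogonal polynomial of 𝒱. -/
theorem stmt14 (D : Polynomial ℝ →ₗ[ℝ] Polynomial ℝ) (η : ℕ → ℝ) (m : ℕ)
    (hν : NuData D m η) (hm : 1 ≤ m) (U V : Polynomial ℝ →ₗ[ℝ] ℝ)
    (hU : PosDef U) (hV : PosDef V) (Q : ℕ → Polynomial ℝ) (hQ : IsMOPS V Q)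
    (S : ℝ → ℕ → Polynomial ℝ)
    (hS : ∀ lam : ℝ, 0 < lam → IsSobMOPS U V lam D m (S lam))
    (T : ℕ → Polynomial ℝ) (hTmonic : ∀ n, (T n).Monic) (hTdeg : ∀ n, (T n).natDegree = n)
    (hT : ∀ n i : ℕ, Filter.Tendsto (fun lam => (S lam n).coeff i)
      Filter.atTop (nhds ((T n).coeff i))) :
    (∀ n j : ℕ, j + m < n → V (((D ^ m) (T n)) * X ^ j) = 0) ∧
      ∀ n : ℕ, (D ^ m) (T (n + m)) = C (η n) * Q n := by
  obtain ⟨hη0, hD⟩ := lemD hν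
  -- core limit fact
  have hcore : ∀ n i : ℕ, i + m < n →
      V ((D ^ m) (T n) * (D ^ m) (X ^ (i + m))) = 0 := by
    intro n i hin
    have hfdeg : ∀ᶠ lam in Filter.atTop, (S lam n).natDegree ≤ n :=
      (Filter.eventually_gt_atTop 0).mono fun lam hl => le_of_eq ((hS lam hl).2.1 n)
    have t1 : Filter.Tendsto (fun lam => U (S lam n * X ^ (i + m)))
        Filter.atTop (nhds (U (T n * X ^ (i + m)))) := by
      exact lemB (U.comp (LinearMap.mulRight ℝ (X ^ (i + m)))) n (fun lam => S lam n)
        (T n) hfdeg (le_of_eq (hTdeg n)) (hT n)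
    have t2 : Filter.Tendsto (fun lam => V ((D ^ m) (S lam n) * (D ^ m) (X ^ (i + m))))
        Filter.atTop (nhds (V ((D ^ m) (T n) * (D ^ m) (X ^ (i + m))))) := by
      exact lemB ((V.comp (LinearMap.mulRight ℝ ((D ^ m) (X ^ (i + m))))).comp (D ^ m)) n
        (fun lam => S lam n) (T n) hfdeg (le_of_eq (hTdeg n)) (hT n)
    have heq : (fun lam => -lam⁻¹ * U (S lam n * X ^ (i + m))) =ᶠ[Filter.atTop]
        (fun lam => V ((D ^ m) (S lam n) * (D ^ m) (X ^ (i + m)))) := by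
      filter_upwards [Filter.eventually_gt_atTop 0] with lam hl
      have hmops := hS lam hl
      have horth : sob U V lam D m (S lam n) (X ^ (i + m)) = 0 := by
        have h0 := lemA (sobLin U V lam D m (S lam n)) (S lam) hmops.2.1
          (fun k => (hmops.1 k).ne_zero) n
          (fun k hk => by rw [sobLin_apply]; exact hmops.2.2 n k (by omega))
          (X ^ (i + m)) (by rw [natDegree_X_pow]; omega)
        rw [sobLin_apply] at h0; exact h0
      rw [sob] at horth
      have hlam : lam ≠ 0 := ne_of_gt hl
      field_simp
      linarith [horth]
    have t3 : Filter.Tendsto (fun lam => -lam⁻¹ * U (S lam n * X ^ (i + m)))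
        Filter.atTop (nhds 0) := by
      have h4 : Filter.Tendsto (fun lam : ℝ => -lam⁻¹) Filter.atTop (nhds 0) := by
        simpa using (tendsto_inv_atTop_zero : Filter.Tendsto (fun r : ℝ => r⁻¹) Filter.atTop (nhds 0)).neg
      simpa using h4.mul t1
    exact (tendsto_nhds_unique (Filter.Tendsto.congr' heq t3) t2).symm ▸ rfl
  -- part 1
  have part1 : ∀ n j : ℕ, j + m < n → V ((D ^ m) (T n) * X ^ j) = 0 := by
    intro n j hj
    have hP : ∀ k, ((D ^ m) (X ^ (k + m) : Polynomial ℝ)).coeff k = η k := by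
      intro k
      rw [(hD (X ^ (k + m)) k (by rw [natDegree_X_pow])).2, coeff_X_pow, if_pos rfl, mul_one]
    exact lemA (V.comp (LinearMap.mulLeft ℝ ((D ^ m) (T n))))
      (fun k => (D ^ m) (X ^ (k + m)))
      (fun k => le_antisymm (hD (X ^ (k + m)) k (by rw [natDegree_X_pow])).1
        (le_natDegree_of_ne_zero (by rw [hP k]; exact hη0 k)))
      (fun k hz => hη0 k (by
        rw [← hP k, show (D ^ m) (X ^ (k + m) : Polynomial ℝ) = 0 from hz, coeff_zero]))
      (n - m) (fun k hk => hcore n k (by omega)) (X ^ j) (by rw [natDegree_X_pow]; omega)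
  refine ⟨part1, fun n => ?_⟩
  -- part 2
  have hVQ : ∀ k, k < n → V (Q n * X ^ k) = 0 := by
    intro k hk
    exact lemA (V.comp (LinearMap.mulLeft ℝ (Q n))) Q hQ.2.1 (fun j => (hQ.1 j).ne_zero) n
      (fun j hj => hQ.2.2 n j (by omega)) (X ^ k) (by rw [natDegree_X_pow]; omega)
  have hR := hD (T (n + m)) n (le_of_eq (hTdeg (n + m)))
  have hRco : ((D ^ m) (T (n + m))).coeff n = η n := by
    have h1 : (T (n + m)).coeff (n + m) = 1 := by
      have := (hTmonic (n + m)).coeff_natDegree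
      rwa [hTdeg (n + m)] at this
    rw [hR.2, h1, mul_one]
  rw [← sub_eq_zero]
  by_contra hne
  set p := (D ^ m) (T (n + m)) - C (η n) * Q n with hp
  have hdp : p.natDegree ≤ n :=
    le_trans (natDegree_sub_le _ _)
      (max_le hR.1 (le_trans (natDegree_C_mul_le _ _) (le_of_eq (hQ.2.1 n))))
  have hcp : p.coeff n = 0 := by
    have hQc : (Q n).coeff n = 1 := by
      have := (hQ.1 n).coeff_natDegree
      rwa [hQ.2.1 n] at this
    simp [hp, coeff_sub, coeff_C_mul, hRco, hQc]
  have hdp' : p.natDegree < n :=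
    lt_of_le_of_ne hdp fun he =>
      hne (leadingCoeff_eq_zero.mp (by rw [Polynomial.leadingCoeff, he, hcp]))
  have hVp : ∀ k, k < n → V (p * X ^ k) = 0 := by
    intro k hk
    have e : p * X ^ k = (D ^ m) (T (n + m)) * X ^ k - C (η n) * (Q n * X ^ k) := by
      rw [hp]; ring
    rw [e, map_sub, part1 (n + m) k (by omega), ← Polynomial.smul_eq_C_mul, map_smul,
      smul_eq_mul, hVQ k hk]
    simp
  have hVpp : V (p * p) = 0 :=
    lemA (V.comp (LinearMap.mulLeft ℝ p)) (fun k => X ^ k) (fun k => natDegree_X_pow k)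
      (fun k => pow_ne_zero k Polynomial.X_ne_zero) n (fun k hk => hVp k hk) p hdp'
  exact absurd hVpp (ne_of_gt (hV p hne))
end

section
/- Let (𝒰,𝒱) be an (M,N)-D_ν-coherent pair of order m: the monic OPS {P_n} of 𝒰 and {Q_n} of 𝒱 satisfy P_n^{[m,ν]}(x) + Σ_{i=1}^{M} a_{i,n} P_{n-i}^{[m,ν]}(x) = Q_n(x) + Σ_{i=1}^{N} b_{i,n} Q_{n-i}(x) for n ≥ 0. Let {S_n(x;λ,ν)} be the monic OPS of the Sobolev inner product ⟨p,r⟩_{λ,ν} = ⟨𝒰, pr⟩ + λ⟨𝒱, (D_ν^m p)(D_ν^m r)⟩ and K = max{M,N}. Then there exist constants c_{j,n,λ,ν} (1 ≤ j ≤ K, with c_{j,n,λ,ν} = 0 for n < j) such that P_{n+m}(x) + Σ_{i=1}^{M} (η_{n,m,ν} a_{i,n}/η_{n-i,m,ν}) P_{n-i+m}(x) = S_{n+m}(x;λ,ν) + Σ_{j=1}^{K} c_{j,n,λ,ν} S_{n-j+m}(x;λ,ν) for all n ≥ 0. -/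
open Polynomial Finset

section Aux

/-- helper: degree drop -/
lemma natDegree_le_pred_of_coeff_eq_zero (e : Polynomial ℝ) (d : ℕ)
    (h1 : e.natDegree ≤ d) (h2 : e.coeff d = 0) : e.natDegree ≤ d - 1 := by
  by_cases he : e = 0
  · simp [he]
  · rcases lt_or_eq_of_le h1 with h | h
    · omega
    · exfalso
      apply Polynomial.leadingCoeff_ne_zero.mpr he
      rw [Polynomial.leadingCoeff, h, h2]

/-- The key structural property of difference operators. -/
def GoodD (D : Polynomial ℝ →ₗ[ℝ] Polynomial ℝ) : Prop :=
  ∀ p : Polynomial ℝ, (p.natDegree = 0 → D p = 0) ∧ (D p).natDegree ≤ p.natDegree - 1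

lemma goodD_Dw (ω : ℝ) : GoodD (Dw ω) := by
  intro p
  constructor
  · intro h0
    obtain ⟨c, rfl⟩ := Polynomial.natDegree_eq_zero.mp h0
    show C ω⁻¹ * ((C c).comp (X + C ω) - C c) = 0
    rw [Polynomial.C_comp, sub_self, mul_zero]
  · show (C ω⁻¹ * (p.comp (X + C ω) - p)).natDegree ≤ p.natDegree - 1
    refine le_trans (Polynomial.natDegree_C_mul_le _ _) ?_
    refine natDegree_le_pred_of_coeff_eq_zero _ _ ?_ ?_
    · refine le_trans (Polynomial.natDegree_sub_le _ _) ?_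
      simp [Polynomial.natDegree_comp]
    · have hcomp : (p.comp (X + C ω)).natDegree = p.natDegree := by
        simp [Polynomial.natDegree_comp]
      have hlc : (p.comp (X + C ω)).coeff p.natDegree = p.coeff p.natDegree := by
        conv_lhs => rw [← hcomp]
        rw [← Polynomial.leadingCoeff, ← Polynomial.leadingCoeff,
          Polynomial.leadingCoeff_comp (by simp)]
        simp [Polynomial.leadingCoeff_X_add_C]
      simp [Polynomial.coeff_sub, hlc]

lemma goodD_Dq (q : ℝ) : GoodD (Dq q) := by
  intro p
  constructor
  · intro h0
    obtain ⟨c, rfl⟩ := Polynomial.natDegree_eq_zero.mp h0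
    show C (q-1)⁻¹ * ((C c).comp (C q * X) - C c).divX = 0
    rw [Polynomial.C_comp, sub_self, Polynomial.divX_zero, mul_zero]
  · show (C (q-1)⁻¹ * (p.comp (C q * X) - p).divX).natDegree ≤ p.natDegree - 1
    refine le_trans (Polynomial.natDegree_C_mul_le _ _) ?_
    rw [Polynomial.natDegree_divX_eq_natDegree_tsub_one]
    have : (p.comp (C q * X) - p).natDegree ≤ p.natDegree := by
      refine le_trans (Polynomial.natDegree_sub_le _ _) ?_
      refine max_le (le_trans Polynomial.natDegree_comp_le ?_) le_rfl
      have : (C q * X : Polynomial ℝ).natDegree ≤ 1 :=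
        le_trans (Polynomial.natDegree_C_mul_le _ _) (by simp)
      calc p.natDegree * (C q * X : Polynomial ℝ).natDegree ≤ p.natDegree * 1 :=
            Nat.mul_le_mul_left _ this
        _ = p.natDegree := by ring
    omega

lemma goodD_of {D : Polynomial ℝ →ₗ[ℝ] Polynomial ℝ} {m : ℕ} {η : ℕ → ℝ}
    (hν : NuData D m η) : GoodD D := by
  rcases hν with ⟨ω, _, rfl, _⟩ | ⟨q, _, _, _, rfl, _⟩
  · exact goodD_Dw ω
  · exact goodD_Dq q

lemma goodD_pow {D : Polynomial ℝ →ₗ[ℝ] Polynomial ℝ} (hD : GoodD D) (j : ℕ) :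
    ∀ p : Polynomial ℝ, ((D ^ j) p).natDegree ≤ p.natDegree - j ∧
      (p.natDegree < j → (D ^ j) p = 0) := by
  induction j with
  | zero => intro p; simp
  | succ t ih =>
    intro p
    have hstep := hD p
    have hrec := ih (D p)
    have happ : (D ^ (t + 1)) p = (D ^ t) (D p) := by
      rw [pow_succ, Module.End.mul_apply]
    constructor
    · rw [happ]
      calc ((D ^ t) (D p)).natDegree ≤ (D p).natDegree - t := hrec.1
        _ ≤ (p.natDegree - 1) - t := by omega
        _ = p.natDegree - (t + 1) := by omega
    · intro hlt
      rw [happ]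
      by_cases h0 : p.natDegree = 0
      · rw [hstep.1 h0, map_zero]
      · exact hrec.2 (by omega)

lemma eta_ne_zero {D : Polynomial ℝ →ₗ[ℝ] Polynomial ℝ} {m : ℕ} {η : ℕ → ℝ}
    (hν : NuData D m η) : ∀ n, η n ≠ 0 := by
  rcases hν with ⟨ω, _, _, rfl⟩ | ⟨q, hq0, hq1, hqm1, _, rfl⟩
  · intro n
    have : (0 : ℝ) < ∏ k ∈ Finset.range m, ((n : ℝ) + 1 + k) := by
      apply Finset.prod_pos
      intro k _
      positivity
    exact ne_of_gt this
  · intro n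
    apply div_ne_zero
    · apply Finset.prod_ne_zero_iff.mpr
      intro k _
      intro h
      have hq : q ^ (n + 1 + k) = 1 := by linarith [sub_eq_zero.mp h]
      have habs : |q| ^ (n + 1 + k) = 1 := by
        rw [← abs_pow, hq, abs_one]
      have h1 : |q| ≠ 1 := by
        intro h1
        rcases (abs_eq (by norm_num : (0:ℝ) ≤ 1)).mp h1 with h | h
        · exact hq1 h
        · exact hqm1 h
      have hpos : (0:ℝ) < |q| := abs_pos.mpr hq0
      rcases lt_trichotomy |q| 1 with h | h | h
      · have := pow_lt_one₀ (le_of_lt hpos) h (by omega : n + 1 + k ≠ 0)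
        linarith
      · exact h1 h
      · have := one_lt_pow₀ h (by omega : n + 1 + k ≠ 0)
        linarith
    · exact pow_ne_zero _ (sub_ne_zero.mpr (by intro h; exact hq1 h.symm))

end Aux

section Aux2

lemma mops_expand (T : ℕ → Polynomial ℝ) (hmon : ∀ n, (T n).Monic)
    (hdeg : ∀ n, (T n).natDegree = n) :
    ∀ nb (p : Polynomial ℝ), p.natDegree < nb →
      ∃ d : ℕ → ℝ, p = ∑ k ∈ Finset.range nb, d k • T k := by
  intro nb
  induction nb with
  | zero => intro p h; omega
  | succ t ih =>
    intro p hp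
    set p' := p - p.coeff t • T t with hp'
    have hTt : (T t).coeff t = 1 := by
      have := (hmon t).coeff_natDegree
      rwa [hdeg t] at this
    have hc : p'.coeff t = 0 := by
      rw [hp', Polynomial.coeff_sub, Polynomial.coeff_smul, hTt, smul_eq_mul, mul_one, sub_self]
    have hle : p'.natDegree ≤ t := by
      refine le_trans (Polynomial.natDegree_sub_le _ _) (max_le (by omega) ?_)
      exact le_trans (Polynomial.natDegree_smul_le _ _) (le_of_eq (hdeg t))
    by_cases h0 : p' = 0
    · refine ⟨fun k => if k = t then p.coeff t else 0, ?_⟩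
      have hpe : p = p.coeff t • T t := by
        rw [← sub_eq_zero]; exact h0
      rw [Finset.sum_range_succ]
      simp only [if_pos rfl]
      rw [Finset.sum_eq_zero (fun k hk => by
        rw [if_neg (by simp at hk; omega), zero_smul])]
      rw [zero_add]; exact hpe
    · have hlt : p'.natDegree < t := by
        rcases lt_or_eq_of_le hle with h | h
        · exact h
        · exfalso; apply Polynomial.leadingCoeff_ne_zero.mpr h0
          rw [Polynomial.leadingCoeff, h, hc]
      obtain ⟨d', hd'⟩ := ih p' hlt
      refine ⟨fun k => if k = t then p.coeff t else d' k, ?_⟩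
      rw [Finset.sum_range_succ]
      simp only [if_pos rfl]
      have heq : ∑ k ∈ Finset.range t, (if k = t then p.coeff t else d' k) • T k
           = ∑ k ∈ Finset.range t, d' k • T k := by
        refine Finset.sum_congr rfl fun k hk => ?_
        rw [if_neg (by simp at hk; omega)]
      rw [heq, ← hd', hp']; simp

lemma mops_orth (U : Polynomial ℝ →ₗ[ℝ] ℝ) (T : ℕ → Polynomial ℝ)
    (hmon : ∀ n, (T n).Monic) (hdeg : ∀ n, (T n).natDegree = n)
    (horth : ∀ n k, n ≠ k → U (T n * T k) = 0) :
    ∀ (r : ℕ) (p : Polynomial ℝ), p.natDegree < r → U (T r * p) = 0 := by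
  intro r p hp
  obtain ⟨d, hd⟩ := mops_expand T hmon hdeg r p hp
  have heq : U (T r * p) = ∑ k ∈ Finset.range r, d k * U (T r * T k) := by
    rw [hd, Finset.mul_sum, map_sum]
    refine Finset.sum_congr rfl fun k _ => ?_
    rw [mul_smul_comm, map_smul, smul_eq_mul]
  rw [heq]
  refine Finset.sum_eq_zero fun k hk => ?_
  rw [horth r k (by simp at hk; omega), mul_zero]

lemma sob_sum_left {ι : Type*} (U V : Polynomial ℝ →ₗ[ℝ] ℝ) (lam : ℝ)
    (D : Polynomial ℝ →ₗ[ℝ] Polynomial ℝ) (m : ℕ) (s : Finset ι)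
    (f : ι → Polynomial ℝ) (r : Polynomial ℝ) :
    sob U V lam D m (∑ i ∈ s, f i) r = ∑ i ∈ s, sob U V lam D m (f i) r := by
  unfold sob
  rw [Finset.sum_mul, map_sum, map_sum, Finset.sum_mul, map_sum, Finset.mul_sum,
    ← Finset.sum_add_distrib]

lemma sob_smul_left (U V : Polynomial ℝ →ₗ[ℝ] ℝ) (lam : ℝ)
    (D : Polynomial ℝ →ₗ[ℝ] Polynomial ℝ) (m : ℕ) (c : ℝ)
    (p r : Polynomial ℝ) :
    sob U V lam D m (c • p) r = c * sob U V lam D m p r := by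
  unfold sob
  rw [smul_mul_assoc, map_smul, map_smul, smul_mul_assoc, map_smul, smul_eq_mul, smul_eq_mul]
  ring

lemma sob_sub_left (U V : Polynomial ℝ →ₗ[ℝ] ℝ) (lam : ℝ)
    (D : Polynomial ℝ →ₗ[ℝ] Polynomial ℝ) (m : ℕ)
    (p p' r : Polynomial ℝ) :
    sob U V lam D m (p - p') r = sob U V lam D m p r - sob U V lam D m p' r := by
  unfold sob
  rw [sub_mul, map_sub, map_sub, sub_mul, map_sub]
  ring

lemma sob_pos (U V : Polynomial ℝ →ₗ[ℝ] ℝ) (lam : ℝ)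
    (D : Polynomial ℝ →ₗ[ℝ] Polynomial ℝ) (m : ℕ)
    (hU : PosDef U) (hV : PosDef V) (hlam : 0 < lam) (p : Polynomial ℝ) (hp : p ≠ 0) :
    0 < sob U V lam D m p p := by
  unfold sob
  have h1 := hU p hp
  have h2 : 0 ≤ lam * V ((D^m) p * (D^m) p) := by
    by_cases h : (D^m) p = 0
    · simp [h]
    · exact le_of_lt (mul_pos hlam (hV _ h))
  linarith

end Aux2

lemma key_lemma (D : Polynomial ℝ →ₗ[ℝ] Polynomial ℝ) (η : ℕ → ℝ) (m : ℕ)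
    (hν : NuData D m η) (hm : 1 ≤ m) (lam : ℝ) (hlam : 0 < lam)
    (U V : Polynomial ℝ →ₗ[ℝ] ℝ) (hU : PosDef U) (hV : PosDef V)
    (P Q S : ℕ → Polynomial ℝ) (hP : IsMOPS U P) (hQ : IsMOPS V Q)
    (hS : IsSobMOPS U V lam D m S)
    (M N : ℕ) (a b : ℕ → ℕ → ℝ) (hcoh : Coherent D η m P Q M N a b) (n : ℕ) :
    ∃ d : ℕ → ℝ,
      (P (n + m) + ∑ i ∈ Finset.Icc 1 M, (η n / η (n - i) * a i n) • P (n - i + m))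
        = S (n + m) + ∑ k ∈ Finset.range (n + m), d k • S k ∧
      ∀ k, k < n + m → (k < m ∨ k < n + m - max M N) → d k = 0 := by
  obtain ⟨hPmon, hPdeg, hPorth⟩ := hP
  obtain ⟨hQmon, hQdeg, hQorth⟩ := hQ
  obtain ⟨hSmon, hSdeg, hSorth⟩ := hS
  obtain ⟨ha0, hb0, haz, hbz, -, -, hrel⟩ := hcoh
  have hη := eta_ne_zero hν
  have hD := goodD_of hν
  set F : Polynomial ℝ :=
    P (n + m) + ∑ i ∈ Finset.Icc 1 M, (η n / η (n - i) * a i n) • P (n - i + m) with hF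
  have hFr : F = ∑ i ∈ Finset.range (M + 1), (η n / η (n - i) * a i n) • P (n - i + m) := by
    rw [hF, Finset.sum_range_succ']
    have h0 : (η n / η (n - 0) * a 0 n) • P (n - 0 + m) = P (n + m) := by
      simp only [Nat.sub_zero, ha0 n, mul_one]
      rw [div_self (hη n), one_smul]
    rw [h0, add_comm]
    congr 1
    rw [← Finset.Ico_add_one_right_eq_Icc, Finset.sum_Ico_eq_sum_range]
    exact Finset.sum_congr rfl fun i _ => by rw [add_comm 1 i]
  have hdegF : F.natDegree ≤ n + m := by
    rw [hFr]
    refine Polynomial.natDegree_sum_le_of_forall_le _ _ fun i _ => ?_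
    refine le_trans (Polynomial.natDegree_smul_le _ _) ?_
    rw [hPdeg]; omega
  have hcF : F.coeff (n + m) = 1 := by
    have h1 : (P (n + m)).coeff (n + m) = 1 := by
      have := (hPmon (n + m)).coeff_natDegree; rwa [hPdeg] at this
    have hz : ∑ i ∈ Finset.Icc 1 M,
        ((η n / η (n - i) * a i n) • P (n - i + m)).coeff (n + m) = 0 := by
      refine Finset.sum_eq_zero fun i hi => ?_
      simp only [Finset.mem_Icc] at hi
      rw [Polynomial.coeff_smul, smul_eq_mul]
      by_cases hin : i ≤ n
      · rw [Polynomial.coeff_eq_zero_of_natDegree_lt (by rw [hPdeg]; omega), mul_zero]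
      · rw [haz i n (by omega), mul_zero, zero_mul]
    rw [hF, Polynomial.coeff_add, Polynomial.finset_sum_coeff, hz, add_zero, h1]
  have hSc : (S (n + m)).coeff (n + m) = 1 := by
    have := (hSmon (n + m)).coeff_natDegree; rwa [hSdeg] at this
  set G : Polynomial ℝ := F - S (n + m) with hG
  have hdegG : G.natDegree < n + m := by
    have hle : G.natDegree ≤ n + m :=
      le_trans (Polynomial.natDegree_sub_le _ _) (max_le hdegF (le_of_eq (hSdeg _)))
    have hcG : G.coeff (n + m) = 0 := by
      rw [hG, Polynomial.coeff_sub, hcF, hSc, sub_self]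
    have := natDegree_le_pred_of_coeff_eq_zero G (n + m) hle hcG
    omega
  obtain ⟨d, hd⟩ := mops_expand S hSmon hSdeg (n + m) G hdegG
  refine ⟨d, ?_, ?_⟩
  · rw [← hd, hG]; ring
  · intro k hk hcase
    -- the coefficient d k is sob G (S k) / sob (S k) (S k)
    have hGsob : sob U V lam D m G (S k) = d k * sob U V lam D m (S k) (S k) := by
      rw [hd, sob_sum_left,
        Finset.sum_eq_single_of_mem k (Finset.mem_range.mpr hk)
          (fun j _ hjk => by rw [sob_smul_left, hSorth j k hjk, mul_zero]),
        sob_smul_left]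
    -- U part vanishes
    have hUpart : U (F * S k) = 0 := by
      rw [hFr, Finset.sum_mul, map_sum]
      refine Finset.sum_eq_zero fun i hi => ?_
      simp only [Finset.mem_range] at hi
      rw [smul_mul_assoc, map_smul, smul_eq_mul]
      by_cases hin : i ≤ n
      · rw [mops_orth U P hPmon hPdeg hPorth (n - i + m) (S k)
          (by rw [hSdeg]; omega), mul_zero]
      · rw [haz i n (by omega), mul_zero, zero_mul]
    -- rewrite D^m F via coherence
    have hDF : (D ^ m) F = η n • ∑ i ∈ Finset.range (N + 1), b i n • Q (n - i) := by
      rw [hFr, map_sum, ← hrel n, Finset.smul_sum]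
      refine Finset.sum_congr rfl fun i _ => ?_
      rw [map_smul]
      have hPm : (D ^ m) (P (n - i + m)) = η (n - i) • Pm D η m P (n - i) := by
        rw [Pm, Polynomial.smul_eq_C_mul, ← mul_assoc, ← Polynomial.C_mul,
          mul_inv_cancel₀ (hη (n - i)), Polynomial.C_1, one_mul]
      rw [hPm, smul_smul, smul_smul]
      congr 1
      field_simp [hη (n - i)]
    -- V part vanishes
    have hVpart : V ((D ^ m) F * (D ^ m) (S k)) = 0 := by
      by_cases hkm : k < m
      · rw [(goodD_pow hD m (S k)).2 (by rw [hSdeg]; omega), mul_zero, map_zero]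
      · have hdegSk : ((D ^ m) (S k)).natDegree ≤ k - m := by
          have := (goodD_pow hD m (S k)).1; rwa [hSdeg] at this
        have hkK : k < n + m - max M N := by omega
        rw [hDF, smul_mul_assoc, map_smul, smul_eq_mul, Finset.sum_mul, map_sum]
        have hz : ∑ i ∈ Finset.range (N + 1),
            V ((b i n • Q (n - i)) * (D ^ m) (S k)) = 0 := by
          refine Finset.sum_eq_zero fun i hi => ?_
          simp only [Finset.mem_range] at hi
          rw [smul_mul_assoc, map_smul, smul_eq_mul]
          by_cases hin : i ≤ n
          · rw [mops_orth V Q hQmon hQdeg hQorth (n - i) ((D ^ m) (S k))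
              (by omega), mul_zero]
          · rw [hbz i n (by omega), zero_mul]
        rw [hz, mul_zero]
    have hFS : sob U V lam D m F (S k) = 0 := by
      unfold sob
      rw [hUpart, hVpart, mul_zero, add_zero]
    have h0 : sob U V lam D m G (S k) = 0 := by
      rw [hG, sob_sub_left, hFS, hSorth (n + m) k (by omega), sub_zero]
    have hpos := sob_pos U V lam D m hU hV hlam (S k) (hSmon k).ne_zero
    rw [hGsob] at h0
    rcases mul_eq_zero.mp h0 with h | h
    · exact h
    · exact absurd h (ne_of_gt hpos)

/-- for an (M,N)-D_ν-coherent pair of order m of positive definite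
functionals, there are constants c_{j,n,λ,ν} (vanishing for n < j) such that
P_{n+m} + Σ_{i=1}^M (η_{n}a_{i,n}/η_{n-i}) P_{n-i+m}
  = S_{n+m} + Σ_{j=1}^{max{M,N}} c_{j,n,λ,ν} S_{n-j+m} for all n ≥ 0. -/
theorem stmt15 (D : Polynomial ℝ →ₗ[ℝ] Polynomial ℝ) (η : ℕ → ℝ) (m : ℕ)
    (hν : NuData D m η) (hm : 1 ≤ m) (lam : ℝ) (hlam : 0 < lam)
    (U V : Polynomial ℝ →ₗ[ℝ] ℝ) (hU : PosDef U) (hV : PosDef V)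
    (P Q S : ℕ → Polynomial ℝ) (hP : IsMOPS U P) (hQ : IsMOPS V Q)
    (hS : IsSobMOPS U V lam D m S)
    (M N : ℕ) (a b : ℕ → ℕ → ℝ) (hcoh : Coherent D η m P Q M N a b) :
    ∃ c : ℕ → ℕ → ℝ, (∀ j n : ℕ, n < j → c j n = 0) ∧
      ∀ n : ℕ,
        P (n + m) + ∑ i ∈ Finset.Icc 1 M, (η n / η (n - i) * a i n) • P (n - i + m)
          = S (n + m) + ∑ j ∈ Finset.Icc 1 (max M N), c j n • S (n - j + m) := by
  have key := key_lemma D η m hν hm lam hlam U V hU hV P Q S hP hQ hS M N a b hcoh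
  choose d hd1 hd2 using key
  set K := max M N with hK
  refine ⟨fun j n => if j ≤ n ∧ j ≤ K then d n (n + m - j) else 0, ?_, ?_⟩
  · intro j n h
    dsimp only
    rw [if_neg]
    push_neg
    intro h'
    omega
  · intro n
    rw [hd1 n]
    congr 1
    have hstep1 : ∑ k ∈ Finset.range (n + m), d n k • S k
        = ∑ j ∈ Finset.Icc 1 (n + m), d n (n + m - j) • S (n + m - j) := by
      refine Finset.sum_nbij' (fun k => n + m - k) (fun j => n + m - j)
        ?_ ?_ ?_ ?_ ?_
      · intro k hk; simp only [Finset.mem_range] at hk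
        simp only [Finset.mem_Icc]; omega
      · intro j hj; simp only [Finset.mem_Icc] at hj
        simp only [Finset.mem_range]; omega
      · intro k hk; simp only [Finset.mem_range] at hk; omega
      · intro j hj; simp only [Finset.mem_Icc] at hj; omega
      · intro k hk; simp only [Finset.mem_range] at hk
        have he : n + m - (n + m - k) = k := by omega
        rw [he]
    rw [hstep1]
    rw [Finset.sum_subset (Finset.Icc_subset_Icc_right (le_max_left (n + m) K))
      (fun j hj hj' => ?_)]
    rw [Finset.sum_subset (Finset.Icc_subset_Icc_right (le_max_right (n + m) K))
      (fun j hj hj' => ?_)]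
    · refine Finset.sum_congr rfl fun j hj => ?_
      simp only [Finset.mem_Icc] at hj
      dsimp only
      by_cases hc : j ≤ n ∧ j ≤ K
      · rw [if_pos hc]
        have he : n - j + m = n + m - j := by omega
        rw [he]
      · rw [if_neg hc]
        rw [hd2 n (n + m - j) (by omega) (by omega), zero_smul, zero_smul]
    · -- j ∈ Icc 1 (max (n+m) K), j ∉ Icc 1 K : c-term is zero
      simp only [Finset.mem_Icc] at hj hj'
      dsimp only
      rw [if_neg (by omega), zero_smul]
    · -- j ∈ Icc 1 (max (n+m) K), j ∉ Icc 1 (n+m) : d-term is zero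
      simp only [Finset.mem_Icc] at hj hj'
      have he : n + m - j = 0 := by omega
      rw [he, hd2 n 0 (by omega) (Or.inl (by omega)), zero_smul]
end
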